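/- arXiv:1208.6322 — 5 statements merged into one kernel-verified Lean document; each statement's English description precedes it below -/
import Mathlib

section
/- For every x ∈ ℝ^n with x ≥ 0 and every assignment y ∈ Ȳ_i, there exists a feasible integral flow f of value n in the instance (G,c)^i_x whose cost satisfies c(f) = −Σ_{j∈J} Σ_{k∈K} d^k_{ij} x_j y_{jk}; explicitly, setting f(s,v_j) = 1 for all j ∈ J, f(v_j,w_k) = y_{jk} for all j ∈ J, k ∈ K, and f(w_k,t) = Σ_{j∈J} y_{jk} for all k ∈ K yields such a flow. -/
open Finset

/-- The band index set `K = {K⁻, …, -1, 0, 1, …, K⁺}`. -/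
noncomputable def bands (Km Kp : ℤ) : Finset ℤ := Finset.Icc Km Kp

/-- `Y_i`: the set of feasible 0-1 deviation assignments. -/
def memY (n : ℕ) (Km Kp : ℤ) (l u : ℤ → ℕ) (y : Fin n → ℤ → ℕ) : Prop :=
  (∀ j : Fin n, ∀ k ∈ bands Km Kp, y j k ≤ 1) ∧
  (∀ k ∈ bands Km Kp, l k ≤ ∑ j : Fin n, y j k ∧ ∑ j : Fin n, y j k ≤ u k) ∧
  (∀ j : Fin n, ∑ k ∈ bands Km Kp, y j k ≤ 1)

/-- `Ȳ_i`: feasible deviation assignments distributing all `n` coefficients among the bands. -/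
def memYbar (n : ℕ) (Km Kp : ℤ) (l u : ℤ → ℕ) (y : Fin n → ℤ → ℕ) : Prop :=
  memY n Km Kp l u y ∧ ∑ j : Fin n, ∑ k ∈ bands Km Kp, y j k = n

/-- A feasible integral flow of value `n` in the min-cost flow instance `(G,c)ⁱₓ`:
`fs j` is the flow on arc `(s, v_j)` (bounds `[0,1]`), `fm j k` is the flow on arc
`(v_j, w_k)` (bounds `[0,1]`), and `ft k` is the flow on arc `(w_k, t)` (bounds `[l_k, u_k]`);
flow conservation holds at every vertex `v_j` and `w_k`, and the flow value is `n`. -/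
def IsFlow (n : ℕ) (Km Kp : ℤ) (l u : ℤ → ℕ)
    (fs : Fin n → ℕ) (fm : Fin n → ℤ → ℕ) (ft : ℤ → ℕ) : Prop :=
  (∀ j : Fin n, fs j ≤ 1) ∧
  (∀ j : Fin n, ∀ k ∈ bands Km Kp, fm j k ≤ 1) ∧
  (∀ k ∈ bands Km Kp, l k ≤ ft k ∧ ft k ≤ u k) ∧
  (∀ j : Fin n, fs j = ∑ k ∈ bands Km Kp, fm j k) ∧
  (∀ k ∈ bands Km Kp, ∑ j : Fin n, fm j k = ft k) ∧
  (∑ j : Fin n, fs j = n)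

/-- The cost `c(f) = ∑_j ∑_k (-d^k_{ij} x_j) f(v_j, w_k)` of a flow (only the middle arcs
have nonzero cost). -/
noncomputable def flowCost (n : ℕ) (Km Kp : ℤ) (d : Fin n → ℤ → ℝ) (x : Fin n → ℝ)
    (fm : Fin n → ℤ → ℕ) : ℝ :=
  ∑ j : Fin n, ∑ k ∈ bands Km Kp, -(d j k * x j) * (fm j k : ℝ)

/-- for every `x ≥ 0` and every `y ∈ Ȳ_i`, setting `f(s,v_j) = 1`,
`f(v_j,w_k) = y_{jk}` and `f(w_k,t) = ∑_j y_{jk}` yields a feasible integral flow of value `n`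
in `(G,c)ⁱₓ` whose cost is `-∑_j ∑_k d^k_{ij} x_j y_{jk}`. -/
theorem stmt_9 (n : ℕ) (hn : 0 < n) (Km Kp : ℤ) (hKm : Km < 0) (hKp : 0 < Kp)
    (d : Fin n → ℤ → ℝ) (hd0 : ∀ j : Fin n, d j 0 = 0)
    (l u : ℤ → ℕ)
    (hlu : ∀ k ∈ bands Km Kp, l k ≤ u k)
    (hun : ∀ k ∈ bands Km Kp, u k ≤ n)
    (hu0 : u 0 = n)
    (hl : ∑ k ∈ bands Km Kp, l k ≤ n)
    (x : Fin n → ℝ) (hx : ∀ j, 0 ≤ x j)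
    (y : Fin n → ℤ → ℕ) (hy : memYbar n Km Kp l u y) :
    IsFlow n Km Kp l u (fun _ => 1) y (fun k => ∑ j : Fin n, y j k) ∧
    flowCost n Km Kp d x y
      = -(∑ j : Fin n, ∑ k ∈ bands Km Kp, d j k * x j * (y j k : ℝ)) := by
  obtain ⟨⟨h1, h2, h3⟩, htot⟩ := hy
  have hrow : ∀ j : Fin n, ∑ k ∈ bands Km Kp, y j k = 1 := by
    have hle : ∀ j ∈ (univ : Finset (Fin n)), ∑ k ∈ bands Km Kp, y j k ≤ 1 :=
      fun j _ => h3 j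
    have heq : ∑ j : Fin n, ∑ k ∈ bands Km Kp, y j k = ∑ _j : Fin n, 1 := by
      simpa using htot
    intro j
    exact (Finset.sum_eq_sum_iff_of_le hle).mp heq j (mem_univ j)
  refine ⟨⟨fun j => le_refl 1, h1, h2, fun j => (hrow j).symm, fun k _ => rfl, by simp⟩, ?_⟩
  unfold flowCost
  rw [← Finset.sum_neg_distrib]
  exact Finset.sum_congr rfl fun j _ => by
    rw [← Finset.sum_neg_distrib]
    exact Finset.sum_congr rfl fun k _ => by ring
end

section
/- For every x ∈ ℝ^n with x ≥ 0 and every feasible integral flow f of value n in the instance (G,c)^i_x, the assignment y defined by y_{jk} = f(v_j,w_k) for j ∈ J, k ∈ K belongs to Ȳ_i and satisfies Σ_{j∈J} Σ_{k∈K} d^k_{ij} x_j y_{jk} = −c(f). -/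
open Finset

/-- for every `x ≥ 0` and every feasible integral flow `f` of value `n` in
`(G,c)ⁱₓ`, the assignment `y_{jk} := f(v_j, w_k)` belongs to `Ȳ_i` and its total deviation
equals `-c(f)`. -/
theorem stmt_10 (n : ℕ) (hn : 0 < n) (Km Kp : ℤ) (hKm : Km < 0) (hKp : 0 < Kp)
    (d : Fin n → ℤ → ℝ) (hd0 : ∀ j : Fin n, d j 0 = 0)
    (l u : ℤ → ℕ)
    (hlu : ∀ k ∈ bands Km Kp, l k ≤ u k)
    (hun : ∀ k ∈ bands Km Kp, u k ≤ n)
    (hu0 : u 0 = n)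
    (hl : ∑ k ∈ bands Km Kp, l k ≤ n)
    (x : Fin n → ℝ) (hx : ∀ j, 0 ≤ x j)
    (fs : Fin n → ℕ) (fm : Fin n → ℤ → ℕ) (ft : ℤ → ℕ)
    (hf : IsFlow n Km Kp l u fs fm ft) :
    memYbar n Km Kp l u fm ∧
    ∑ j : Fin n, ∑ k ∈ bands Km Kp, d j k * x j * (fm j k : ℝ)
      = -(flowCost n Km Kp d x fm) := by
  obtain ⟨h1, h2, h3, h4, h5, h6⟩ := hf
  refine ⟨⟨⟨h2, fun k hk => ⟨(h5 k hk) ▸ (h3 k hk).1, (h5 k hk) ▸ (h3 k hk).2⟩,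
      fun j => (h4 j) ▸ h1 j⟩, ?_⟩, ?_⟩
  · calc ∑ j : Fin n, ∑ k ∈ bands Km Kp, fm j k
        = ∑ j : Fin n, fs j := by simp_rw [h4]
      _ = n := h6
  · simp [flowCost, neg_mul, mul_assoc]
end

section
/- For every x ∈ ℝ^n with x ≥ 0, the maximum deviation satisfies DEV_i(x) = −c*_i(x), where c*_i(x) is the minimum cost of a feasible integral flow of value n in the instance (G,c)^i_x (and such a minimum-cost flow exists). -/
open Finset

lemma exists_memY (n : ℕ) (Km Kp : ℤ) (hKm : Km ≤ 0) (hKp : 0 ≤ Kp)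
    (l u : ℤ → ℕ) (hlu : ∀ k ∈ bands Km Kp, l k ≤ u k) (hu0 : u 0 = n)
    (hl : ∑ k ∈ bands Km Kp, l k ≤ n) :
    ∃ y : Fin n → ℤ → ℕ, memY n Km Kp l u y := by
  classical
  set B := bands Km Kp with hB
  have h0B : (0:ℤ) ∈ B := by simp [hB, bands]; omega
  set S := ∑ k ∈ B, l k with hS
  set L : ℤ → ℕ := fun k => ∑ k' ∈ Finset.Icc Km (k-1), l k' with hL
  have hsumIcc : ∀ k : ℤ, Km ≤ k → L k + l k = ∑ k'' ∈ Finset.Icc Km k, l k'' := by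
    intro k h1
    have hins : Finset.Icc Km k = insert k (Finset.Icc Km (k-1)) := by
      ext m; simp only [Finset.mem_Icc, Finset.mem_insert]; omega
    rw [hins, Finset.sum_insert (by simp only [Finset.mem_Icc]; omega)]
    simp [hL]; omega
  have hmono : ∀ k k' : ℤ, Km ≤ k → k < k' → L k + l k ≤ L k' := by
    intro k k' h1 h2
    rw [hsumIcc k h1, hL]
    exact Finset.sum_le_sum_of_subset (Finset.Icc_subset_Icc le_rfl (by omega))
  have hLS : ∀ k ∈ B, L k + l k ≤ S := by
    intro k hk
    simp only [hB, bands, Finset.mem_Icc] at hk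
    rw [hsumIcc k hk.1, hS]
    exact Finset.sum_le_sum_of_subset (Finset.Icc_subset_Icc le_rfl hk.2)
  set cond : ℕ → ℤ → Prop := fun m k => (L k ≤ m ∧ m < L k + l k) ∨ (k = 0 ∧ S ≤ m)
    with hcond
  refine ⟨fun j k => if k ∈ B ∧ cond j.1 k then 1 else 0, ?_, ?_, ?_⟩
  · intro j k _; beta_reduce; split_ifs <;> simp
  · intro k hk
    beta_reduce
    by_cases hk0 : k = 0
    · subst hk0
      constructor
      · calc l 0 = ∑ j : Fin n, (if (j:ℕ) ∈ Finset.Ico (L 0) (L 0 + l 0) then 1 else 0) := by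
              rw [Fin.sum_univ_eq_sum_range (fun m => if m ∈ Finset.Ico (L 0) (L 0 + l 0) then 1 else 0)]
              rw [Finset.sum_ite_mem]
              rw [Finset.range_eq_Ico, Finset.inter_eq_right.mpr
                (Finset.Ico_subset_Ico (Nat.zero_le _) (le_trans (hLS 0 h0B) hl))]
              simp
          _ ≤ _ := by
              apply Finset.sum_le_sum
              intro j _
              by_cases hj : (j:ℕ) ∈ Finset.Ico (L 0) (L 0 + l 0)
              · rw [if_pos hj, if_pos ⟨h0B, Or.inl (by simpa [Finset.mem_Ico] using hj)⟩]
              · simp [hj]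
      · rw [hu0]
        calc ∑ j : Fin n, _ ≤ ∑ _j : Fin n, 1 := by
              apply Finset.sum_le_sum; intro j _; split_ifs <;> simp
          _ = n := by simp
    · have hkB := hk
      have : ∀ j : Fin n, (if k ∈ B ∧ cond j.1 k then 1 else 0)
          = (if (j:ℕ) ∈ Finset.Ico (L k) (L k + l k) then 1 else 0) := by
        intro j
        have : (k ∈ B ∧ cond j.1 k) ↔ (j:ℕ) ∈ Finset.Ico (L k) (L k + l k) := by
          simp only [hcond, Finset.mem_Ico]
          constructor
          · rintro ⟨_, h | ⟨h, _⟩⟩; · exact h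
            · exact absurd h hk0
          · intro h; exact ⟨hk, Or.inl h⟩
        rw [if_congr this rfl rfl]
      rw [Finset.sum_congr rfl (fun j _ => this j)]
      have hcount : ∑ j : Fin n, (if (j:ℕ) ∈ Finset.Ico (L k) (L k + l k) then 1 else 0) = l k := by
        rw [Fin.sum_univ_eq_sum_range (fun m => if m ∈ Finset.Ico (L k) (L k + l k) then 1 else 0)]
        rw [Finset.sum_ite_mem]
        rw [Finset.range_eq_Ico, Finset.inter_eq_right.mpr
          (Finset.Ico_subset_Ico (Nat.zero_le _) (le_trans (hLS k hk) hl))]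
        simp
      rw [hcount]
      exact ⟨le_rfl, hlu k hk⟩
  · intro j
    beta_reduce
    have hrw : ∀ k ∈ B, (if k ∈ B ∧ cond j.1 k then (1:ℕ) else 0) = if cond j.1 k then 1 else 0 := by
      intro k hk; by_cases h : cond j.1 k <;> simp [h, hk]
    rw [Finset.sum_congr rfl hrw, ← Finset.card_filter]
    rw [Finset.card_le_one]
    intro a ha b hb
    simp only [Finset.mem_filter] at ha hb
    by_contra hne
    have key : ∀ p q : ℤ, p ∈ B → q ∈ B → cond j.1 p → cond j.1 q → p < q → False := by
      intro p q hp hq hcp hcq hpq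
      have hpKm : Km ≤ p := by simpa [hB, bands, Finset.mem_Icc] using (by
        simpa [hB, bands, Finset.mem_Icc] using hp : Km ≤ p ∧ p ≤ Kp).1
      rcases hcp with hcp | ⟨hp0, hpS⟩ <;> rcases hcq with hcq | ⟨hq0, hqS⟩
      · have := hmono p q hpKm hpq; omega
      · have := hLS p hp; omega
      · have := hLS q hq; omega
      · omega
    rcases lt_trichotomy a b with h | h | h
    · exact key a b ha.1 hb.1 ha.2 hb.2 h
    · exact hne h
    · exact key b a hb.1 ha.1 hb.2 ha.2 h

/-- for every `x ≥ 0`, the maximum deviation `DEV_i(x)` (attained over `Y_i`)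
equals `-c*_i(x)`, where `c*_i(x)` is the minimum cost of a feasible integral flow of value
`n` in `(G,c)ⁱₓ` (and a minimum-cost flow exists). -/
theorem stmt_11 (n : ℕ) (hn : 0 < n) (Km Kp : ℤ) (hKm : Km < 0) (hKp : 0 < Kp)
    (d : Fin n → ℤ → ℝ) (hd0 : ∀ j : Fin n, d j 0 = 0)
    (l u : ℤ → ℕ)
    (hlu : ∀ k ∈ bands Km Kp, l k ≤ u k)
    (hun : ∀ k ∈ bands Km Kp, u k ≤ n)
    (hu0 : u 0 = n)
    (hl : ∑ k ∈ bands Km Kp, l k ≤ n)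
    (x : Fin n → ℝ) (hx : ∀ j, 0 ≤ x j) :
    ∃ D cstar : ℝ,
      IsGreatest {v : ℝ | ∃ y : Fin n → ℤ → ℕ, memY n Km Kp l u y ∧
        v = ∑ j : Fin n, ∑ k ∈ bands Km Kp, d j k * x j * (y j k : ℝ)} D ∧
      IsLeast {c : ℝ | ∃ (fs : Fin n → ℕ) (fm : Fin n → ℤ → ℕ) (ft : ℤ → ℕ),
        IsFlow n Km Kp l u fs fm ft ∧ c = flowCost n Km Kp d x fm} cstar ∧
      D = -cstar := by
  classical
  have h0B : (0:ℤ) ∈ bands Km Kp := by simp [bands]; omega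
  set val : (Fin n → ℤ → ℕ) → ℝ :=
    fun y => ∑ j : Fin n, ∑ k ∈ bands Km Kp, d j k * x j * (y j k : ℝ) with hval
  set SY : Set ℝ := {v : ℝ | ∃ y : Fin n → ℤ → ℕ, memY n Km Kp l u y ∧ v = val y} with hSY
  -- SY is nonempty
  obtain ⟨y₀, hy₀⟩ := exists_memY n Km Kp hKm.le hKp.le l u hlu hu0 hl
  have hne : SY.Nonempty := ⟨val y₀, y₀, hy₀, rfl⟩
  -- SY is finite
  have hfin : SY.Finite := by
    apply Set.Finite.subset (Set.finite_range
      (fun z : Fin n → {k // k ∈ bands Km Kp} → Fin 2 =>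
        ∑ j : Fin n, ∑ k ∈ (bands Km Kp).attach, d j k.1 * x j * ((z j k : ℕ) : ℝ)))
    rintro v ⟨y, hy, rfl⟩
    refine ⟨fun j k => if y j k.1 = 1 then 1 else 0, ?_⟩
    rw [hval]
    refine Finset.sum_congr rfl fun j _ => ?_
    rw [← Finset.sum_attach (bands Km Kp) (fun k => d j k * x j * (y j k : ℝ))]
    refine Finset.sum_congr rfl fun k _ => ?_
    have h1 : y j k.1 ≤ 1 := hy.1 j k.1 k.2
    interval_cases h : y j k.1 <;> simp [h]
  -- greatest element
  obtain ⟨D, hDmem, hDmax⟩ : ∃ D ∈ SY, ∀ v ∈ SY, id D ≤ id v → id D = id v := by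
    obtain ⟨D, hD1, hD2⟩ := hfin.exists_maximalFor id SY hne
    exact ⟨D, hD1, fun v hv h => le_antisymm h (hD2 hv h)⟩
  have hDub : ∀ v ∈ SY, v ≤ D := by
    intro v hv
    rcases le_total v D with h | h
    · exact h
    · exact le_of_eq (hDmax v hv h).symm
  refine ⟨D, -D, ⟨hDmem, hDub⟩, ⟨?_, ?_⟩, by ring⟩
  · -- -D is attained by a flow
    obtain ⟨y, hy, rfl⟩ := hDmem
    set yb : Fin n → ℤ → ℕ := fun j k =>
      if k = 0 then (if (∑ k' ∈ bands Km Kp, y j k') = 0 then 1 else y j 0) else y j k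
      with hyb
    have hyb0 : ∀ j : Fin n, yb j 0
        = if (∑ k' ∈ bands Km Kp, y j k') = 0 then 1 else y j 0 := fun j => if_pos rfl
    have hybne : ∀ (j : Fin n) (k : ℤ), k ≠ 0 → yb j k = y j k := fun j k hk => if_neg hk
    have hrow : ∀ j : Fin n, ∑ k ∈ bands Km Kp, yb j k = 1 := by
      intro j
      by_cases h : ∑ k' ∈ bands Km Kp, y j k' = 0
      · have hz : ∀ k ∈ bands Km Kp, y j k = 0 := fun k hk => (Finset.sum_eq_zero_iff.mp h) k hk
        have he : ∀ k ∈ bands Km Kp, yb j k = if k = 0 then 1 else 0 := by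
          intro k hk
          by_cases hk0 : k = 0
          · subst hk0; rw [hyb0 j, if_pos h, if_pos rfl]
          · rw [hybne j k hk0, if_neg hk0, hz k hk]
        rw [Finset.sum_congr rfl he, Finset.sum_ite_eq' (bands Km Kp) (0:ℤ) (fun _ => 1)]
        rw [if_pos h0B]
      · have he : ∀ k ∈ bands Km Kp, yb j k = y j k := by
          intro k hk
          by_cases hk0 : k = 0
          · subst hk0; rw [hyb0 j, if_neg h]
          · exact hybne j k hk0
        rw [Finset.sum_congr rfl he]
        exact Nat.le_antisymm (hy.2.2 j) (Nat.one_le_iff_ne_zero.mpr h)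
    have hyb1 : ∀ j : Fin n, ∀ k ∈ bands Km Kp, yb j k ≤ 1 := by
      intro j k hk
      by_cases hk0 : k = 0
      · subst hk0; rw [hyb0 j]
        split_ifs
        · exact le_rfl
        · exact hy.1 j 0 h0B
      · rw [hybne j k hk0]; exact hy.1 j k hk
    have hyble : ∀ (j : Fin n) (k : ℤ), y j k ≤ yb j k := by
      intro j k
      by_cases hk0 : k = 0
      · subst hk0; rw [hyb0 j]
        split_ifs with h
        · have : y j 0 = 0 := (Finset.sum_eq_zero_iff.mp h) 0 h0B
          omega
        · exact le_rfl
      · rw [hybne j k hk0]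
    refine ⟨fun j => ∑ k ∈ bands Km Kp, yb j k, yb, fun k => ∑ j : Fin n, yb j k,
      ⟨?_, hyb1, ?_, fun j => rfl, fun k _ => rfl, ?_⟩, ?_⟩
    · intro j; beta_reduce; rw [hrow j]
    · intro k hk
      beta_reduce
      by_cases hk0 : k = 0
      · subst hk0
        constructor
        · calc l 0 ≤ ∑ j : Fin n, y j 0 := (hy.2.1 0 h0B).1
            _ ≤ ∑ j : Fin n, yb j 0 := Finset.sum_le_sum fun j _ => hyble j 0
        · rw [hu0]
          calc ∑ j : Fin n, yb j 0 ≤ ∑ _j : Fin n, 1 :=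
                Finset.sum_le_sum fun j _ => hyb1 j 0 h0B
            _ = n := by simp
      · rw [Finset.sum_congr rfl fun j _ => hybne j k hk0]
        exact hy.2.1 k hk
    · beta_reduce
      rw [Finset.sum_congr rfl fun (j : Fin n) _ => hrow j]
      simp
    · -- cost equality
      have hcv : flowCost n Km Kp d x yb = -(val yb) := by
        rw [flowCost, hval, ← Finset.sum_neg_distrib]
        refine Finset.sum_congr rfl fun j _ => ?_
        rw [← Finset.sum_neg_distrib]
        refine Finset.sum_congr rfl fun k _ => by ring
      have hvv : val yb = val y := by
        rw [hval]
        refine Finset.sum_congr rfl fun j _ => Finset.sum_congr rfl fun k hk => ?_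
        by_cases hk0 : k = 0
        · subst hk0; rw [hd0 j]; ring
        · rw [hybne j k hk0]
      rw [hcv, hvv]
  · -- -D is a lower bound for flow costs
    rintro c ⟨fs, fm, ft, ⟨hf1, hf2, hf3, hf4, hf5, hf6⟩, rfl⟩
    have hmem : -flowCost n Km Kp d x fm ∈ SY := by
      refine ⟨fm, ⟨hf2, fun k hk => by rw [hf5 k hk]; exact hf3 k hk,
        fun j => by rw [← hf4 j]; exact hf1 j⟩, ?_⟩
      rw [flowCost, hval, ← Finset.sum_neg_distrib]
      refine Finset.sum_congr rfl fun j _ => ?_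
      rw [← Finset.sum_neg_distrib]
      exact Finset.sum_congr rfl fun k _ => by ring
    have := hDub _ hmem
    linarith
end

section
/- For every x ∈ ℝ^n with x ≥ 0, the vector x is robust feasible for constraint i (i.e., Σ_{j∈J} ā_{ij} x_j + DEV_i(x) ≤ b_i) if and only if Σ_{j∈J} ā_{ij} x_j − c*_i(x) ≤ b_i, where c*_i(x) is the minimum cost of a feasible integral flow of value n in the instance (G,c)^i_x. -/
open Finset

/-- for every `x ≥ 0`, `x` is robust feasible for constraint `i`
(`∑_j ā_{ij} x_j + DEV_i(x) ≤ b_i`, where `DEV_i(x)` is the attained maximum deviation over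
`Y_i`) iff `∑_j ā_{ij} x_j - c*_i(x) ≤ b_i`, where `c*_i(x)` is the minimum cost of a feasible
integral flow of value `n` in `(G,c)ⁱₓ`. -/
theorem stmt_12 (n : ℕ) (hn : 0 < n) (Km Kp : ℤ) (hKm : Km < 0) (hKp : 0 < Kp)
    (a : Fin n → ℝ) (b : ℝ)
    (d : Fin n → ℤ → ℝ) (hd0 : ∀ j : Fin n, d j 0 = 0)
    (l u : ℤ → ℕ)
    (hlu : ∀ k ∈ bands Km Kp, l k ≤ u k)
    (hun : ∀ k ∈ bands Km Kp, u k ≤ n)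
    (hu0 : u 0 = n)
    (hl : ∑ k ∈ bands Km Kp, l k ≤ n)
    (x : Fin n → ℝ) (hx : ∀ j, 0 ≤ x j)
    (D cstar : ℝ)
    (hD : IsGreatest {v : ℝ | ∃ y : Fin n → ℤ → ℕ, memY n Km Kp l u y ∧
      v = ∑ j : Fin n, ∑ k ∈ bands Km Kp, d j k * x j * (y j k : ℝ)} D)
    (hcstar : IsLeast {c : ℝ | ∃ (fs : Fin n → ℕ) (fm : Fin n → ℤ → ℕ) (ft : ℤ → ℕ),
      IsFlow n Km Kp l u fs fm ft ∧ c = flowCost n Km Kp d x fm} cstar) :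
    (∑ j : Fin n, a j * x j + D ≤ b) ↔ (∑ j : Fin n, a j * x j - cstar ≤ b) := by
  have h0mem : (0:ℤ) ∈ bands Km Kp := by
    simp only [bands, Finset.mem_Icc]; omega
  obtain ⟨hDmem, hDub⟩ := hD
  obtain ⟨hcmem, hclb⟩ := hcstar
  have hcostneg : ∀ fm : Fin n → ℤ → ℕ, flowCost n Km Kp d x fm =
      -(∑ j : Fin n, ∑ k ∈ bands Km Kp, d j k * x j * (fm j k : ℝ)) := by
    intro fm
    simp [flowCost, neg_mul, Finset.sum_neg_distrib]
  have h1 : -cstar ≤ D := by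
    obtain ⟨fs, fm, ft, ⟨hfs, hfm, hft, hcons, hcons2, hval⟩, hc⟩ := hcmem
    apply hDub
    refine ⟨fm, ⟨hfm, fun k hk => ?_, fun j => ?_⟩, ?_⟩
    · rw [hcons2 k hk]; exact hft k hk
    · rw [← hcons j]; exact hfs j
    · rw [hc, hcostneg, neg_neg]
  have h2 : D ≤ -cstar := by
    obtain ⟨y, ⟨hy1, hy2, hy3⟩, hDval⟩ := hDmem
    set e : Fin n → ℕ := fun j => 1 - ∑ k ∈ bands Km Kp, y j k with he
    set y' : Fin n → ℤ → ℕ := fun j k => y j k + if k = 0 then e j else 0 with hy'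
    have hy0le : ∀ j : Fin n, y j 0 ≤ ∑ k ∈ bands Km Kp, y j k := fun j =>
      Finset.single_le_sum (fun k _ => Nat.zero_le _) h0mem
    have hsum' : ∀ j : Fin n, ∑ k ∈ bands Km Kp, y' j k = 1 := by
      intro j
      have : ∑ k ∈ bands Km Kp, y' j k
          = (∑ k ∈ bands Km Kp, y j k) + e j := by
        rw [hy', Finset.sum_add_distrib, Finset.sum_ite_eq' _ (0:ℤ), if_pos h0mem]
      rw [this]
      have h2 := hy3 j
      show (∑ k ∈ bands Km Kp, y j k) + (1 - ∑ k ∈ bands Km Kp, y j k) = 1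
      omega
    refine le_neg_of_le_neg ?_
    apply hclb
    refine ⟨fun _ => 1, y', fun k => ∑ j : Fin n, y' j k,
      ⟨fun j => le_refl 1, fun j k hk => ?_, fun k hk => ⟨?_, ?_⟩,
       fun j => (hsum' j).symm, fun k _ => rfl, by simp⟩, ?_⟩
    · -- y' j k ≤ 1
      rw [hy']
      by_cases h : k = 0
      · subst h
        have h1 := hy0le j
        have h2 := hy3 j
        show y j 0 + (1 - ∑ k ∈ bands Km Kp, y j k) ≤ 1
        omega
      · simp [h]; exact hy1 j k hk
    · -- l k ≤ ft k
      show l k ≤ ∑ j : Fin n, y' j k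
      refine le_trans (hy2 k hk).1 (Finset.sum_le_sum fun j _ => ?_)
      rw [hy']; exact Nat.le_add_right _ _
    · -- ft k ≤ u k
      show ∑ j : Fin n, y' j k ≤ u k
      by_cases h : k = 0
      · subst h
        rw [hu0]
        calc ∑ j : Fin n, y' j 0 ≤ ∑ j : Fin n, 1 := by
              refine Finset.sum_le_sum fun j _ => ?_
              rw [hy']
              have h1 := hy0le j
              have h2 := hy3 j
              show y j 0 + (1 - ∑ k ∈ bands Km Kp, y j k) ≤ 1
              omega
          _ = n := by simp
      · have : ∑ j : Fin n, y' j k = ∑ j : Fin n, y j k := by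
          apply Finset.sum_congr rfl
          intro j _
          simp [hy', h]
        rw [this]; exact (hy2 k hk).2
    · -- cost equality: -D = flowCost of y'
      rw [hcostneg, neg_eq_iff_eq_neg, neg_neg, hDval]
      apply Finset.sum_congr rfl
      intro j _
      apply Finset.sum_congr rfl
      intro k hk
      rw [hy']
      by_cases h : k = 0
      · subst h; simp [hd0 j]
      · simp [h]
  constructor <;> intro h <;> linarith
end

section
/- Let m be the number of constraints, each constraint i having nominal coefficients ā_{ij}, right-hand side b_i, and its own deviation values d^k_{ij}. A vector x ∈ ℝ^n with x ≥ 0 is robust feasible (i.e., Σ_{j∈J} ā_{ij} x_j + DEV_i(x) ≤ b_i for all i = 1,…,m) if and only if Σ_{j∈J} ā_{ij} x_j − c*_i(x) ≤ b_i for all i = 1,…,m, where c*_i(x) is the minimum cost of a feasible integral flow of value n in the instance (G,c)^i_x. -/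
open Finset

/-- with `m` constraints, `x ≥ 0` is robust feasible
(`∑_j ā_{ij} x_j + DEV_i(x) ≤ b_i` for all `i`, where `DEV i` is the attained maximum
deviation of constraint `i` over `Y_i`) iff `∑_j ā_{ij} x_j - c*_i(x) ≤ b_i` for all `i`,
where `cstar i` is the minimum cost of a feasible integral flow of value `n` in `(G,c)ⁱₓ`. -/
theorem stmt_13 (n m : ℕ) (hn : 0 < n) (Km Kp : ℤ) (hKm : Km < 0) (hKp : 0 < Kp)
    (a : Fin m → Fin n → ℝ) (b : Fin m → ℝ)
    (d : Fin m → Fin n → ℤ → ℝ) (hd0 : ∀ (i : Fin m) (j : Fin n), d i j 0 = 0)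
    (l u : ℤ → ℕ)
    (hlu : ∀ k ∈ bands Km Kp, l k ≤ u k)
    (hun : ∀ k ∈ bands Km Kp, u k ≤ n)
    (hu0 : u 0 = n)
    (hl : ∑ k ∈ bands Km Kp, l k ≤ n)
    (x : Fin n → ℝ) (hx : ∀ j, 0 ≤ x j)
    (DEV cstar : Fin m → ℝ)
    (hDEV : ∀ i : Fin m, IsGreatest {v : ℝ | ∃ y : Fin n → ℤ → ℕ, memY n Km Kp l u y ∧
      v = ∑ j : Fin n, ∑ k ∈ bands Km Kp, d i j k * x j * (y j k : ℝ)} (DEV i))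
    (hcstar : ∀ i : Fin m, IsLeast {c : ℝ |
      ∃ (fs : Fin n → ℕ) (fm : Fin n → ℤ → ℕ) (ft : ℤ → ℕ),
        IsFlow n Km Kp l u fs fm ft ∧ c = flowCost n Km Kp (d i) x fm} (cstar i)) :
    (∀ i : Fin m, ∑ j : Fin n, a i j * x j + DEV i ≤ b i) ↔
    (∀ i : Fin m, ∑ j : Fin n, a i j * x j - cstar i ≤ b i) := by

  classical
  have h0 : (0:ℤ) ∈ bands Km Kp := by
    simp only [bands, Finset.mem_Icc]; omega
  have key : ∀ i, cstar i = -DEV i := by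
    intro i
    obtain ⟨⟨y, ⟨hy1, hy2, hy3⟩, hval⟩, hub⟩ := hDEV i
    set y' : Fin n → ℤ → ℕ :=
      fun j k => y j k + (if k = 0 ∧ ∑ k' ∈ bands Km Kp, y j k' = 0 then 1 else 0) with hy'def
    have hrow : ∀ j : Fin n, ∑ k ∈ bands Km Kp, y' j k = 1 := by
      intro j
      have hsum : ∑ k ∈ bands Km Kp, y' j k
          = (∑ k ∈ bands Km Kp, y j k)
            + (if ∑ k' ∈ bands Km Kp, y j k' = 0 then 1 else 0) := by
        rw [Finset.sum_add_distrib]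
        congr 1
        by_cases hP : ∑ k' ∈ bands Km Kp, y j k' = 0
        · simp only [hP, and_true]
          rw [Finset.sum_ite_eq' (bands Km Kp) (0:ℤ) (fun _ => 1)]
          simp [h0, hP]
        · simp [hP]
      rw [hsum]
      have := hy3 j
      by_cases hP : ∑ k' ∈ bands Km Kp, y j k' = 0 <;> simp [hP] <;> omega
    have hsingle : ∀ (j : Fin n) (k : ℤ), k ∈ bands Km Kp → y' j k ≤ 1 := by
      intro j k hk
      calc y' j k ≤ ∑ k ∈ bands Km Kp, y' j k := Finset.single_le_sum (fun _ _ => Nat.zero_le _) hk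
        _ = 1 := hrow j
    have hflow : IsFlow n Km Kp l u (fun _ => 1) y' (fun k => ∑ j : Fin n, y' j k) := by
      refine ⟨fun j => le_refl 1, hsingle, ?_, fun j => (hrow j).symm, fun k _ => rfl, by simp⟩
      intro k hk
      constructor
      · have h1 : l k ≤ ∑ j : Fin n, y j k := (hy2 k hk).1
        have h2 : ∀ j : Fin n, y j k ≤ y' j k := fun j => Nat.le_add_right _ _
        exact le_trans h1 (Finset.sum_le_sum (fun j _ => h2 j))
      · by_cases hk0 : k = 0
        · subst hk0
          rw [hu0]
          calc ∑ j : Fin n, y' j 0 ≤ ∑ j : Fin n, 1 :=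
              Finset.sum_le_sum (fun j _ => hsingle j 0 h0)
            _ = n := by simp
        · have : ∀ j : Fin n, y' j k = y j k := by
            intro j; simp [hy'def, hk0]
          simp only [this]
          exact (hy2 k hk).2
    have hterm : ∀ (j : Fin n), ∀ k ∈ bands Km Kp,
        (-(d i j k * x j) * (y' j k : ℝ)) = -(d i j k * x j) * (y j k : ℝ) := by
      intro j k hk
      by_cases hk0 : k = 0
      · subst hk0; simp [hd0]
      · simp [hy'def, hk0]
    have hcost : flowCost n Km Kp (d i) x y' = -DEV i := by
      unfold flowCost
      rw [hval]
      rw [← Finset.sum_neg_distrib]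
      apply Finset.sum_congr rfl
      intro j _
      rw [← Finset.sum_neg_distrib]
      apply Finset.sum_congr rfl
      intro k hk
      rw [hterm j k hk]
      ring
    have hmem : -DEV i ∈ {c : ℝ |
        ∃ (fs : Fin n → ℕ) (fm : Fin n → ℤ → ℕ) (ft : ℤ → ℕ),
          IsFlow n Km Kp l u fs fm ft ∧ c = flowCost n Km Kp (d i) x fm} :=
      ⟨fun _ => 1, y', fun k => ∑ j : Fin n, y' j k, hflow, hcost.symm⟩
    have hlb : ∀ c ∈ {c : ℝ |
        ∃ (fs : Fin n → ℕ) (fm : Fin n → ℤ → ℕ) (ft : ℤ → ℕ),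
          IsFlow n Km Kp l u fs fm ft ∧ c = flowCost n Km Kp (d i) x fm}, -DEV i ≤ c := by
      rintro c ⟨fs, fm, ft, ⟨hf1, hf2, hf3, hf4, hf5, hf6⟩, hc⟩
      have hmemY : memY n Km Kp l u fm := by
        refine ⟨hf2, ?_, ?_⟩
        · intro k hk
          rw [hf5 k hk]
          exact hf3 k hk
        · intro j
          rw [← hf4 j]
          exact hf1 j
      have hv : -c ≤ DEV i := by
        apply hub
        refine ⟨fm, hmemY, ?_⟩
        rw [hc]
        unfold flowCost
        rw [← Finset.sum_neg_distrib]
        apply Finset.sum_congr rfl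
        intro j _
        rw [← Finset.sum_neg_distrib]
        apply Finset.sum_congr rfl
        intro k _
        ring
      linarith
    exact (hcstar i).unique ⟨hmem, hlb⟩
  constructor <;> intro h i <;> have hi := h i <;> have hk := key i <;> linarith
end
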